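/- In the single-commodity flow formulation of the topological interdiction set, if a feasible solution exists then the set of interdicted edges { (i,j) : x_{ij} = 1 } together with their endpoints forms a subgraph in which every endpoint of an interdicted edge is connected (via edges carrying positive virtual flow, hence via interdicted edges or the chosen dummy edge) to the bus i* with x_{κi*} = 1; in particular, the interdicted edges form a connected subgraph of the network. -/

import Mathlib

open Finset

/-- The subgraph formed by the interdicted lines `{(i,j) : x_{ij} = 1}`. -/
def interdictedGraph {nb : ℕ} (E : Finset (Fin nb × Fin nb))
    (x : Fin nb × Fin nb → ℝ) : SimpleGraph (Fin nb) where
  Adj a b := a ≠ b ∧ (((a, b) ∈ E ∧ x (a, b) = 1) ∨ ((b, a) ∈ E ∧ x (b, a) = 1))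
  symm := by
    constructor
    intro a b h
    exact ⟨h.1.symm, h.2.symm⟩
  loopless := by
    constructor
    intro a h
    exact h.1 rfl

/-- In the single-commodity flow formulation of the topological interdiction
set, any feasible solution is such that every endpoint of an interdicted line
is connected (through the virtual flow, hence via interdicted edges) to the bus
`i*` carrying the chosen dummy edge; in particular, the interdicted edges form
a connected subgraph: any two endpoints of interdicted lines are mutually
reachable in the interdicted subgraph. -/
theorem topological_flow_implies_connected
    {nb : ℕ} (E : Finset (Fin nb × Fin nb)) (k : ℕ)
    (x : Fin nb × Fin nb → ℝ) (y : Fin nb → ℝ) (xκ : Fin nb → ℝ)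
    (δf δr : Fin nb × Fin nb → ℝ) (δκ : Fin nb → ℝ)
    (hxbin : ∀ e, x e = 0 ∨ x e = 1)
    (hybin : ∀ i, y i = 0 ∨ y i = 1)
    (hxκbin : ∀ i, xκ i = 0 ∨ xκ i = 1)
    (hk : ∑ e ∈ E, x e = (k : ℝ))
    (hκone : ∑ i, xκ i = 1)
    (haux : ∀ e ∈ E, x e ≤ y e.1 ∧ x e ≤ y e.2)
    (hδκ : ∀ i, 0 ≤ δκ i ∧ δκ i ≤ (k + 1 : ℝ) * xκ i)
    (hδ : ∀ e ∈ E, (0 ≤ δf e ∧ δf e ≤ (k : ℝ) * x e) ∧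
                    (0 ≤ δr e ∧ δr e ≤ (k : ℝ) * x e))
    (hbal : ∀ i : Fin nb,
      ((∑ e ∈ E.filter (fun e => e.2 = i), δf e) +
       (∑ e ∈ E.filter (fun e => e.1 = i), δr e)) -
      ((∑ e ∈ E.filter (fun e => e.1 = i), δf e) +
       (∑ e ∈ E.filter (fun e => e.2 = i), δr e)) = y i - δκ i)
    (istar : Fin nb) (histar : xκ istar = 1) :
    (∀ u : Fin nb, (∃ e ∈ E, x e = 1 ∧ (e.1 = u ∨ e.2 = u)) →
      (interdictedGraph E x).Reachable u istar) ∧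
    (∀ u v : Fin nb, (∃ e ∈ E, x e = 1 ∧ (e.1 = u ∨ e.2 = u)) →
      (∃ e ∈ E, x e = 1 ∧ (e.1 = v ∨ e.2 = v)) →
      (interdictedGraph E x).Reachable u v) := by
  classical
  have key : ∀ u : Fin nb, (∃ e ∈ E, x e = 1 ∧ (e.1 = u ∨ e.2 = u)) →
      (interdictedGraph E x).Reachable u istar := by
    intro u hu
    by_contra hnr
    set G := interdictedGraph E x with hG
    set S : Finset (Fin nb) := univ.filter (fun i => G.Reachable u i) with hS
    have huS : u ∈ S := by simp only [hS, mem_filter, mem_univ, true_and]; exact SimpleGraph.Reachable.refl u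
    have histarS : istar ∉ S := by simp [hS]; exact hnr
    -- endpoints of an interdicted edge lie on the same side of S
    have hedge : ∀ e ∈ E, x e = 1 → ((e.1 ∈ S) ↔ (e.2 ∈ S)) := by
      intro e he hxe
      by_cases h12 : e.1 = e.2
      · rw [h12]
      · have hadj : G.Adj e.1 e.2 := ⟨h12, Or.inl ⟨by simpa using he, by simpa using hxe⟩⟩
        simp only [hS, mem_filter, mem_univ, true_and]
        exact ⟨fun h => h.trans hadj.reachable, fun h => h.trans hadj.symm.reachable⟩
    -- flows vanish on non-interdicted edges
    have hzf : ∀ e ∈ E, x e = 0 → δf e = 0 := by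
      intro e he h0
      have h := (hδ e he).1
      nlinarith [h.1, h.2]
    have hzr : ∀ e ∈ E, x e = 0 → δr e = 0 := by
      intro e he h0
      have h := (hδ e he).2
      nlinarith [h.1, h.2]
    -- filter swap for flow sums
    have hswap : ∀ g : Fin nb × Fin nb → ℝ, (∀ e ∈ E, x e = 0 → g e = 0) →
        ∑ e ∈ E.filter (fun e => e.2 ∈ S), g e
          = ∑ e ∈ E.filter (fun e => e.1 ∈ S), g e := by
      intro g hg
      rw [sum_filter, sum_filter]
      refine sum_congr rfl fun e he => ?_
      rcases hxbin e with h0 | h1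
      · simp [hg e he h0]
      · by_cases h : e.1 ∈ S
        · simp [h, (hedge e he h1).mp h]
        · have h2 : e.2 ∉ S := fun hc => h ((hedge e he h1).mpr hc)
          simp [h, h2]
    -- sum the balance equations over S
    have hsum : ∑ i ∈ S, (y i - δκ i) = 0 := by
      have h1 : ∑ i ∈ S, (((∑ e ∈ E.filter (fun e => e.2 = i), δf e) +
            (∑ e ∈ E.filter (fun e => e.1 = i), δr e)) -
          ((∑ e ∈ E.filter (fun e => e.1 = i), δf e) +
            (∑ e ∈ E.filter (fun e => e.2 = i), δr e)))
          = ∑ i ∈ S, (y i - δκ i) :=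
        sum_congr rfl fun i _ => hbal i
      rw [← h1]
      rw [show (∑ i ∈ S, (((∑ e ∈ E.filter (fun e => e.2 = i), δf e) +
            (∑ e ∈ E.filter (fun e => e.1 = i), δr e)) -
          ((∑ e ∈ E.filter (fun e => e.1 = i), δf e) +
            (∑ e ∈ E.filter (fun e => e.2 = i), δr e))))
          = ((∑ i ∈ S, ∑ e ∈ E.filter (fun e => e.2 = i), δf e) +
             (∑ i ∈ S, ∑ e ∈ E.filter (fun e => e.1 = i), δr e)) -
            ((∑ i ∈ S, ∑ e ∈ E.filter (fun e => e.1 = i), δf e) +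
             (∑ i ∈ S, ∑ e ∈ E.filter (fun e => e.2 = i), δr e)) by
        rw [sum_sub_distrib, sum_add_distrib, sum_add_distrib]]
      rw [sum_fiberwise_eq_sum_filter E S (fun e => e.2) δf,
          sum_fiberwise_eq_sum_filter E S (fun e => e.1) δr,
          sum_fiberwise_eq_sum_filter E S (fun e => e.1) δf,
          sum_fiberwise_eq_sum_filter E S (fun e => e.2) δr,
          hswap δf hzf, hswap δr hzr]
      ring
    -- xκ vanishes off istar, hence δκ vanishes on S
    have hxκ0 : ∀ i, i ≠ istar → xκ i = 0 := by
      intro i hi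
      have herase : ∑ j ∈ univ.erase istar, xκ j = 0 := by
        have := hκone
        rw [← Finset.add_sum_erase _ _ (mem_univ istar)] at this
        linarith
      have := (sum_eq_zero_iff_of_nonneg (fun j _ => by
        rcases hxκbin j with h | h <;> simp [h])).mp herase
      exact this i (by simp [hi])
    have hδκ0 : ∀ i ∈ S, δκ i = 0 := by
      intro i hiS
      have hne : i ≠ istar := fun h => histarS (h ▸ hiS)
      have h := hδκ i
      have := hxκ0 i hne
      nlinarith [h.1, h.2]
    have hysum : ∑ i ∈ S, y i = 0 := by
      have : ∑ i ∈ S, (y i - δκ i) = ∑ i ∈ S, y i := by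
        refine sum_congr rfl fun i hi => by rw [hδκ0 i hi]; ring
      linarith [hsum, this]
    have hy0 : y u = 0 := by
      have := (sum_eq_zero_iff_of_nonneg (fun j _ => by
        rcases hybin j with h | h <;> simp [h])).mp hysum
      exact this u huS
    obtain ⟨e, he, hxe, hend⟩ := hu
    have h := haux e he
    rcases hend with h1 | h1
    · rw [h1] at h; linarith [h.1]
    · rw [h1] at h; linarith [h.2]
  exact ⟨key, fun u v hu hv => (key u hu).trans (key v hv).symm⟩
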